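/- Suppose ȳ_i < ō_i < φ(s^◇), and define ō_D := min(μ(s^◇), μ(s_d(ȳ_i))) and ū_D := μ(s_c(ō_i)). If D ∈ (ū_D, ō_D), then y_b(D) < ȳ_i and y_a(D) > ō_i, where y_j(D) = (αD/k)(s_in − s_j(D)). -/

import Mathlib

/-- Key algebraic identity for the Haldane fitness function difference. -/
lemma haldane_diff_eq (kS kI sin u v : ℝ) (hkI : kI ≠ 0)
    (hu : kS + u + u ^ 2 / kI ≠ 0) (hv : kS + v + v ^ 2 / kI ≠ 0) :
    v * (sin - v) / (kS + v + v ^ 2 / kI) - u * (sin - u) / (kS + u + u ^ 2 / kI)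
      = (v - u) * (kS * sin - kS * (u + v) - u * v * (1 + sin / kI))
        / ((kS + u + u ^ 2 / kI) * (kS + v + v ^ 2 / kI)) := by
  rw [div_sub_div _ _ hv hu, div_eq_div_iff (mul_ne_zero hv hu) (mul_ne_zero hu hv)]
  field_simp
  ring

/-- Monotonicity of G in the second argument. -/
lemma G_second_lt (kS kI sin u v w : ℝ) (hkS : 0 < kS) (hu : 0 < u) (hwv : w < v)
    (ht : 0 < 1 + sin / kI)
    (h : 0 ≤ kS * sin - kS * (u + v) - u * v * (1 + sin / kI)) :
    0 < kS * sin - kS * (u + w) - u * w * (1 + sin / kI) := by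
  nlinarith [mul_pos hkS (sub_pos.mpr hwv), mul_pos (mul_pos hu (sub_pos.mpr hwv)) ht]

/-- Antitonicity of G. -/
lemma G_second_lt' (kS kI sin u v w : ℝ) (hkS : 0 < kS) (hu : 0 < u) (hvw : v < w)
    (ht : 0 < 1 + sin / kI)
    (h : kS * sin - kS * (u + v) - u * v * (1 + sin / kI) ≤ 0) :
    kS * sin - kS * (u + w) - u * w * (1 + sin / kI) < 0 := by
  nlinarith [mul_pos hkS (sub_pos.mpr hvw), mul_pos (mul_pos hu (sub_pos.mpr hvw)) ht]

/-- If D lies in the admissible interval (μ(s_c(ō_i)), min(μ(s^◇), μ(s_d(ȳ_i)))),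
then y_b(D) < ȳ_i and y_a(D) > ō_i. -/
theorem admissible_dilution (μbar kS kI α k sin D ylo yhi sdia sc sd sa sb : ℝ)
    (hμbar : 0 < μbar) (hkS : 0 < kS) (hkI : 0 < kI) (hα : 0 < α) (hk : 0 < k)
    (hsbar : Real.sqrt (kS * kI) < sin)
    (μ : ℝ → ℝ)
    (hμ : ∀ s : ℝ, μ s = μbar * s / (kS + s + s ^ 2 / kI))
    -- s^◇ is the maximizer of φ(s) = (α/k)μ(s)(s_in − s) on [0, s_in], with s^◇ < s̄
    (hsdia1 : 0 < sdia) (hsdia2 : sdia < Real.sqrt (kS * kI))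
    (hsdiamax : ∀ s ∈ Set.Icc (0 : ℝ) sin,
      α / k * μ s * (sin - s) ≤ α / k * μ sdia * (sin - sdia))
    -- bounds of the region: 0 < ȳ_i < ō_i < φ(s^◇)
    (hylo : 0 < ylo) (hlohi : ylo < yhi)
    (hyhi : yhi < α / k * μ sdia * (sin - sdia))
    -- s_c(ō_i) and s_d(ȳ_i): roots of φ(s) = ō_i and φ(s) = ȳ_i
    (hsc1 : 0 < sc) (hsc2 : sc < sdia) (hsc : α / k * μ sc * (sin - sc) = yhi)
    (hsd1 : sdia < sd) (hsd2 : sd < sin) (hsd : α / k * μ sd * (sin - sd) = ylo)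
    -- μ increasing on [0, s̄], decreasing on [s̄, ∞)
    (hmono : StrictMonoOn μ (Set.Icc 0 (Real.sqrt (kS * kI))))
    (hanti : StrictAntiOn μ (Set.Ici (Real.sqrt (kS * kI))))
    -- s_a(D) < s̄ < s_b(D): the roots of μ(s) = D
    (hsa1 : 0 < sa) (hsa2 : sa < Real.sqrt (kS * kI)) (hra : μ sa = D)
    (hsb1 : Real.sqrt (kS * kI) < sb) (hrb : μ sb = D)
    -- D in the admissible interval
    (hD1 : μ sc < D) (hD2 : D < min (μ sdia) (μ sd)) :
    α * D / k * (sin - sb) < ylo ∧ α * D / k * (sin - sa) > yhi := by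
  have hr0 : 0 < Real.sqrt (kS * kI) := Real.sqrt_pos.mpr (mul_pos hkS hkI)
  have hsin : 0 < sin := hr0.trans hsbar
  have hsd0 : 0 < sd := hsdia1.trans hsd1
  have hsb0 : 0 < sb := hr0.trans hsb1
  have hq : ∀ s : ℝ, 0 ≤ s → 0 < kS + s + s ^ 2 / kI := by
    intro s hs; positivity
  have hqc := hq sc hsc1.le
  have hqa := hq sa hsa1.le
  have hqdia := hq sdia hsdia1.le
  have hqd := hq sd hsd0.le
  have hqb := hq sb hsb0.le
  have hC : 0 < α * μbar / k := by positivity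
  have hrepr : ∀ s : ℝ, α / k * μ s * (sin - s)
      = α * μbar / k * (s * (sin - s) / (kS + s + s ^ 2 / kI)) := by
    intro s; rw [hμ s]; ring
  have hD2a : D < μ sdia := lt_of_lt_of_le hD2 (min_le_left _ _)
  have hD2b : D < μ sd := lt_of_lt_of_le hD2 (min_le_right _ _)
  -- memberships
  have hscI : sc ∈ Set.Icc (0 : ℝ) (Real.sqrt (kS * kI)) :=
    ⟨hsc1.le, (hsc2.trans hsdia2).le⟩
  have hsaI : sa ∈ Set.Icc (0 : ℝ) (Real.sqrt (kS * kI)) := ⟨hsa1.le, hsa2.le⟩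
  have hsdiaI : sdia ∈ Set.Icc (0 : ℝ) (Real.sqrt (kS * kI)) := ⟨hsdia1.le, hsdia2.le⟩
  -- ordering of roots
  have hcsa : sc < sa := (hmono.lt_iff_lt hscI hsaI).mp (by rw [hra]; exact hD1)
  have hsasdia : sa < sdia := (hmono.lt_iff_lt hsaI hsdiaI).mp (by rw [hra]; exact hD2a)
  have hsdb : sd < sb := by
    rcases le_or_gt (Real.sqrt (kS * kI)) sd with h | h
    · exact (hanti.lt_iff_gt hsb1.le h).mp (by rw [hrb]; exact hD2b)
    · exact h.trans hsb1
  have hsinkI : (0 : ℝ) < 1 + sin / kI := by positivity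
  -- G(sc, sdia) ≥ 0 from the maximizer property at sc
  have hmax_sc := hsdiamax sc ⟨hsc1.le, ((hsc2.trans hsdia2).trans hsbar).le⟩
  have hψ_sc : sc * (sin - sc) / (kS + sc + sc ^ 2 / kI)
      ≤ sdia * (sin - sdia) / (kS + sdia + sdia ^ 2 / kI) := by
    rw [hrepr, hrepr] at hmax_sc
    exact le_of_mul_le_mul_left hmax_sc hC
  have E1 := haldane_diff_eq kS kI sin sc sdia hkI.ne' hqc.ne' hqdia.ne'
  have hnum1 : 0 ≤ (sdia - sc) * (kS * sin - kS * (sc + sdia) - sc * sdia * (1 + sin / kI)) := by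
    have h0 : 0 ≤ (sdia - sc) * (kS * sin - kS * (sc + sdia) - sc * sdia * (1 + sin / kI))
        / ((kS + sc + sc ^ 2 / kI) * (kS + sdia + sdia ^ 2 / kI)) := by
      rw [← E1]; linarith
    have := (le_div_iff₀ (mul_pos hqc hqdia)).mp h0
    linarith
  have hGcd : 0 ≤ kS * sin - kS * (sc + sdia) - sc * sdia * (1 + sin / kI) := by
    by_contra h
    push_neg at h
    have := mul_neg_of_pos_of_neg (sub_pos.mpr hsc2) h
    linarith
  -- G(sc, sa) > 0
  have hGca : 0 < kS * sin - kS * (sc + sa) - sc * sa * (1 + sin / kI) :=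
    G_second_lt kS kI sin sc sdia sa hkS hsc1 hsasdia hsinkI hGcd
  -- hence ψ sc < ψ sa
  have E2 := haldane_diff_eq kS kI sin sc sa hkI.ne' hqc.ne' hqa.ne'
  have hψca : sc * (sin - sc) / (kS + sc + sc ^ 2 / kI)
      < sa * (sin - sa) / (kS + sa + sa ^ 2 / kI) := by
    have : 0 < (sa - sc) * (kS * sin - kS * (sc + sa) - sc * sa * (1 + sin / kI))
        / ((kS + sc + sc ^ 2 / kI) * (kS + sa + sa ^ 2 / kI)) :=
      div_pos (mul_pos (sub_pos.mpr hcsa) hGca) (mul_pos hqc hqa)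
    rw [← E2] at this
    linarith
  -- G(sdia, sd) ≤ 0 from the maximizer property at sd
  have hmax_sd := hsdiamax sd ⟨hsd0.le, hsd2.le⟩
  have hψ_sd : sd * (sin - sd) / (kS + sd + sd ^ 2 / kI)
      ≤ sdia * (sin - sdia) / (kS + sdia + sdia ^ 2 / kI) := by
    rw [hrepr, hrepr] at hmax_sd
    exact le_of_mul_le_mul_left hmax_sd hC
  have E3 := haldane_diff_eq kS kI sin sdia sd hkI.ne' hqdia.ne' hqd.ne'
  have hnum3 : (sd - sdia) * (kS * sin - kS * (sdia + sd) - sdia * sd * (1 + sin / kI)) ≤ 0 := by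
    have h0 : (sd - sdia) * (kS * sin - kS * (sdia + sd) - sdia * sd * (1 + sin / kI))
        / ((kS + sdia + sdia ^ 2 / kI) * (kS + sd + sd ^ 2 / kI)) ≤ 0 := by
      rw [← E3]; linarith
    have := (div_le_iff₀ (mul_pos hqdia hqd)).mp h0
    linarith
  have hGdd : kS * sin - kS * (sdia + sd) - sdia * sd * (1 + sin / kI) ≤ 0 := by
    by_contra h
    push_neg at h
    have := mul_pos (sub_pos.mpr hsd1) h
    linarith
  -- G(sd, sb) < 0
  have hsdiab : sdia < sb := hsdia2.trans hsb1
  have hGdd' : kS * sin - kS * (sd + sdia) - sd * sdia * (1 + sin / kI) ≤ 0 := by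
    linarith [hGdd]
  have hGdb : kS * sin - kS * (sd + sb) - sd * sb * (1 + sin / kI) < 0 :=
    G_second_lt' kS kI sin sd sdia sb hkS hsd0 hsdiab hsinkI (by linarith [hGdd])
  -- hence ψ sb < ψ sd
  have E4 := haldane_diff_eq kS kI sin sd sb hkI.ne' hqd.ne' hqb.ne'
  have hψbd : sb * (sin - sb) / (kS + sb + sb ^ 2 / kI)
      < sd * (sin - sd) / (kS + sd + sd ^ 2 / kI) := by
    have : (sb - sd) * (kS * sin - kS * (sd + sb) - sd * sb * (1 + sin / kI))
        / ((kS + sd + sd ^ 2 / kI) * (kS + sb + sb ^ 2 / kI)) < 0 :=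
      div_neg_of_neg_of_pos (mul_neg_of_pos_of_neg (sub_pos.mpr hsdb) hGdb)
        (mul_pos hqd hqb)
    rw [← E4] at this
    linarith
  constructor
  · -- y_b(D) < ylo
    have gb : α * D / k * (sin - sb)
        = α * μbar / k * (sb * (sin - sb) / (kS + sb + sb ^ 2 / kI)) := by
      rw [← hrepr sb, hrb]; ring
    have gd : ylo = α * μbar / k * (sd * (sin - sd) / (kS + sd + sd ^ 2 / kI)) := by
      rw [← hsd, hrepr sd]
    rw [gb, gd]
    exact mul_lt_mul_of_pos_left hψbd hC
  · -- y_a(D) > yhi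
    have ga : α * D / k * (sin - sa)
        = α * μbar / k * (sa * (sin - sa) / (kS + sa + sa ^ 2 / kI)) := by
      rw [← hrepr sa, hra]; ring
    have gc : yhi = α * μbar / k * (sc * (sin - sc) / (kS + sc + sc ^ 2 / kI)) := by
      rw [← hsc, hrepr sc]
    rw [ga, gc]
    exact mul_lt_mul_of_pos_left hψca hC
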